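/- For any X ⊆ ℝⁿ there exists a minimal (finest) factorizing partition: a partition J₁,…,J_N of {1,…,n} inducing a factorization of X such that for every other partition I₁,…,I_M inducing a factorization of X, each I_i is a union of some of the J_k, namely I_i = ⋃_{k : J_k ⊆ I_i} J_k. -/

import Mathlib

/-- A collection of blocks `C` (a partition of the index set) induces a factorization of
`X ⊆ ℝⁿ` if `X = {x : P_J(x) ∈ P_J(X) for every block J ∈ C}`. -/
def InducesFactorization (n : ℕ) (X : Set (Fin n → ℝ)) (C : Set (Set (Fin n))) : Prop :=
  X = {x | ∀ J ∈ C, ∃ y ∈ X, ∀ i ∈ J, x i = y i}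

open Classical in
/-- Glue two vectors along a predicate. -/
noncomputable def MFPglue {n : ℕ} (P : Fin n → Prop) (y x : Fin n → ℝ) : Fin n → ℝ :=
  fun j => if P j then y j else x j

open Classical

lemma MFPglue_apply {n : ℕ} (P : Fin n → Prop) (y x : Fin n → ℝ) (j : Fin n) :
    MFPglue P y x j = if P j then y j else x j := rfl

/-- Swapping along a block of a factorizing partition keeps us in `X`. -/
lemma MFPswap {n : ℕ} {X : Set (Fin n → ℝ)} {D : Set (Set (Fin n))}
    (hpart : Setoid.IsPartition D) (hind : InducesFactorization n X D)
    {I : Set (Fin n)} (hI : I ∈ D) {x y : Fin n → ℝ} (hx : x ∈ X) (hy : y ∈ X) :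
    MFPglue (· ∈ I) y x ∈ X := by
  rw [hind]
  intro J hJ
  by_cases hJI : J = I
  · refine ⟨y, hy, fun j hj => ?_⟩
    rw [MFPglue_apply, if_pos (hJI ▸ hj)]
  · refine ⟨x, hx, fun j hj => ?_⟩
    rw [MFPglue_apply, if_neg]
    intro hjI
    obtain ⟨b, _, hb⟩ := hpart.2 j
    exact hJI ((hb J ⟨hJ, hj⟩).trans (hb I ⟨hI, hjI⟩).symm)

/-- The relation: `j` belongs to every block of every factorizing partition containing `i`. -/
def MFPRel (n : ℕ) (X : Set (Fin n → ℝ)) (i j : Fin n) : Prop :=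
  ∀ D : Set (Set (Fin n)), Setoid.IsPartition D → InducesFactorization n X D →
    ∀ I ∈ D, i ∈ I → j ∈ I

lemma MFPRel_refl (n : ℕ) (X : Set (Fin n → ℝ)) (i : Fin n) : MFPRel n X i i :=
  fun _ _ _ _ _ h => h

lemma MFPRel_symm {n : ℕ} {X : Set (Fin n → ℝ)} {i j : Fin n} (h : MFPRel n X i j) :
    MFPRel n X j i := by
  intro D hD hind I hI hjI
  obtain ⟨I', ⟨hI'D, hiI'⟩, _⟩ := hD.2 i
  have hjI' : j ∈ I' := h D hD hind I' hI'D hiI'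
  obtain ⟨b, _, hb⟩ := hD.2 j
  have : I = I' := (hb I ⟨hI, hjI⟩).trans (hb I' ⟨hI'D, hjI'⟩).symm
  exact this ▸ hiI'

lemma MFPRel_trans {n : ℕ} {X : Set (Fin n → ℝ)} {i j k : Fin n}
    (h1 : MFPRel n X i j) (h2 : MFPRel n X j k) : MFPRel n X i k :=
  fun D hD hind I hI hiI => h2 D hD hind I hI (h1 D hD hind I hI hiI)

/-- The setoid of the finest factorizing partition. -/
def MFPsetoid (n : ℕ) (X : Set (Fin n → ℝ)) : Setoid (Fin n) :=
  ⟨MFPRel n X, ⟨MFPRel_refl n X, MFPRel_symm, MFPRel_trans⟩⟩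

/-- Swapping along the intersection of blocks containing `i`, over a finite family of
factorizing partitions, keeps us in `X`. -/
lemma MFPswapFinset {n : ℕ} {X : Set (Fin n → ℝ)}
    (T : Finset (Set (Set (Fin n))))
    (hT : ∀ D ∈ T, Setoid.IsPartition D ∧ InducesFactorization n X D)
    {x y : Fin n → ℝ} (hx : x ∈ X) (hy : y ∈ X) (i : Fin n) :
    MFPglue (fun j => ∀ D ∈ T, ∀ I ∈ D, i ∈ I → j ∈ I) y x ∈ X := by
  classical
  revert hT
  induction T using Finset.induction_on with
  | empty =>
    intro _
    have : MFPglue (fun j => ∀ D ∈ (∅ : Finset (Set (Set (Fin n)))), ∀ I ∈ D, i ∈ I → j ∈ I)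
        y x = y := by
      funext j
      rw [MFPglue_apply, if_pos (by simp)]
    rw [this]; exact hy
  | @insert D T' hDT' ih =>
    intro hins
    have hD := hins D (Finset.mem_insert_self D T')
    have hT' : ∀ D' ∈ T', Setoid.IsPartition D' ∧ InducesFactorization n X D' :=
      fun D' hD' => hins D' (Finset.mem_insert_of_mem hD')
    obtain ⟨I₀, ⟨hI₀D, hiI₀⟩, huniq⟩ := hD.1.2 i
    set z' := MFPglue (fun j => ∀ D' ∈ T', ∀ I ∈ D', i ∈ I → j ∈ I) y x with hz'
    have hz'X : z' ∈ X := ih hT'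
    have key : MFPglue (fun j => ∀ D' ∈ insert D T', ∀ I ∈ D', i ∈ I → j ∈ I) y x
        = MFPglue (· ∈ I₀) z' x := by
      funext j
      by_cases hP : ∀ D' ∈ insert D T', ∀ I ∈ D', i ∈ I → j ∈ I
      · have hjI₀ : j ∈ I₀ := hP D (Finset.mem_insert_self D T') I₀ hI₀D hiI₀
        have hPT' : ∀ D' ∈ T', ∀ I ∈ D', i ∈ I → j ∈ I :=
          fun D' hD' => hP D' (Finset.mem_insert_of_mem hD')
        rw [MFPglue_apply, if_pos hP, MFPglue_apply, if_pos hjI₀, hz',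
          MFPglue_apply, if_pos hPT']
      · rw [MFPglue_apply, if_neg hP, MFPglue_apply]
        by_cases hjI₀ : j ∈ I₀
        · rw [if_pos hjI₀, hz', MFPglue_apply, if_neg]
          intro hPT'
          apply hP
          intro D' hD' I hI hiI
          rcases Finset.mem_insert.1 hD' with h | h
          · subst h
            have : I = I₀ := huniq I ⟨hI, hiI⟩
            exact this ▸ hjI₀
          · exact hPT' D' h I hI hiI
        · rw [if_neg hjI₀]
    rw [key]
    exact MFPswap hD.1 hD.2 hI₀D hx hz'X

/-- Swapping along an `MFPRel`-class keeps us in `X`. -/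
lemma MFPswapRel {n : ℕ} {X : Set (Fin n → ℝ)} {x y : Fin n → ℝ}
    (hx : x ∈ X) (hy : y ∈ X) (i : Fin n) :
    MFPglue (MFPRel n X i) y x ∈ X := by
  classical
  set S : Set (Set (Set (Fin n))) :=
    {D | Setoid.IsPartition D ∧ InducesFactorization n X D} with hS
  have hfin : S.Finite := Set.toFinite S
  have hiff : ∀ j, MFPRel n X i j ↔
      (∀ D ∈ hfin.toFinset, ∀ I ∈ D, i ∈ I → j ∈ I) := by
    intro j
    constructor
    · intro h D hD I hI hiI
      have := hfin.mem_toFinset.1 hD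
      exact h D this.1 this.2 I hI hiI
    · intro h D hD1 hD2 I hI hiI
      exact h D (hfin.mem_toFinset.2 ⟨hD1, hD2⟩) I hI hiI
  have hPeq : MFPRel n X i = fun j => ∀ D ∈ hfin.toFinset, ∀ I ∈ D, i ∈ I → j ∈ I :=
    funext fun j => propext (hiff j)
  rw [hPeq]
  exact MFPswapFinset _ (fun D hD => hfin.mem_toFinset.1 hD) hx hy i

theorem exists_minimal_factorizing_partition (n : ℕ) (X : Set (Fin n → ℝ))
    (hX : X.Nonempty) :
    ∃ C : Set (Set (Fin n)), Setoid.IsPartition C ∧ InducesFactorization n X C ∧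
      ∀ D : Set (Set (Fin n)), Setoid.IsPartition D → InducesFactorization n X D →
        ∀ I ∈ D, I = ⋃₀ {J | J ∈ C ∧ J ⊆ I} := by
  classical
  set s := MFPsetoid n X with hs
  refine ⟨s.classes, Setoid.isPartition_classes s, ?_, ?_⟩
  · -- InducesFactorization
    apply Set.Subset.antisymm
    · intro x hx J _
      exact ⟨x, hx, fun _ _ => rfl⟩
    · intro x hx
      have main : ∀ F : Finset (Fin n), ∃ y ∈ X, ∀ j : Fin n,
          (∃ i ∈ F, MFPRel n X j i) → x j = y j := by
        intro F
        induction F using Finset.induction_on with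
        | empty => exact ⟨hX.choose, hX.choose_spec, fun j hj => by simp at hj⟩
        | @insert i F' hiF ih =>
          obtain ⟨y, hyX, hy⟩ := ih
          obtain ⟨w, hwX, hw⟩ := hx {j | s j i} (Setoid.mem_classes s i)
          refine ⟨MFPglue (MFPRel n X i) w y, MFPswapRel hyX hwX i, ?_⟩
          intro j hj
          by_cases hij : MFPRel n X i j
          · rw [MFPglue_apply, if_pos hij]
            exact hw j (MFPRel_symm hij)
          · rw [MFPglue_apply, if_neg hij]
            apply hy
            obtain ⟨i', hi', hrel⟩ := hj
            rcases Finset.mem_insert.1 hi' with h | h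
            · exact absurd (MFPRel_symm (h ▸ hrel)) hij
            · exact ⟨i', h, hrel⟩
      obtain ⟨y, hyX, hy⟩ := main Finset.univ
      have : x = y := funext fun j =>
        hy j ⟨j, Finset.mem_univ j, MFPRel_refl n X j⟩
      exact this ▸ hyX
  · -- minimality
    intro D hDpart hDind I hI
    apply Set.Subset.antisymm
    · intro i hiI
      refine ⟨{j | s j i}, ⟨Setoid.mem_classes s i, ?_⟩, MFPRel_refl n X i⟩
      intro j hj
      exact MFPRel_symm hj D hDpart hDind I hI hiI
    · intro j hj
      obtain ⟨J, ⟨_, hJI⟩, hjJ⟩ := hj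
      exact hJI hjJ
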